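/- Let p ∈ (0,1/2). Then for all n ≥ 1, P(B > n) ≤ e^{−n·D(1/2‖p)}/(1−2p) and P(B > n) ≥ e^{−n·D(1/2‖p)} · p(1−p)(1−2p)/(n+1); consequently, lim_{n→∞} (1/n) log P(B > n) = −D(1/2‖p). -/

import Mathlib

open MeasureTheory ProbabilityTheory Filter

noncomputable section

/-- Kullback–Leibler divergence `D(1/2 ‖ p)` between Bernoulli(1/2) and Bernoulli(p). -/
def Dhalf (p : ℝ) : ℝ := (1/2) * Real.log ((1/2)/p) + (1/2) * Real.log ((1/2)/(1-p))

variable {Ω : Type*} [MeasurableSpace Ω]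

/-- The random walk `X_n = Y_1 + ⋯ + Y_n` (here the steps are indexed `Y 0, Y 1, …`). -/
def walk (Y : ℕ → Ω → ℤ) (n : ℕ) (ω : Ω) : ℤ := ∑ i ∈ Finset.range n, Y i ω

/-- The sign process `X̂_n`: `+1` if `X_n > 0`, `-1` if `X_n < 0`, previous value if `X_n = 0`,
with `X̂_0 = +1`. -/
def sgnProc (Y : ℕ → Ω → ℤ) : ℕ → Ω → ℤ
  | 0 => fun _ => 1
  | n+1 => fun ω =>
      if 0 < walk Y (n+1) ω then 1
      else if walk Y (n+1) ω < 0 then -1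
      else sgnProc Y n ω

/-- `M_n = #{1 ≤ i ≤ n : X̂_i = +1}`. -/
def Mcount (Y : ℕ → Ω → ℤ) (n : ℕ) (ω : Ω) : ℕ :=
  ((Finset.Icc 1 n).filter fun i => sgnProc Y i ω = 1).card

section Aux
open Finset
def bstep (b : Bool) : ℤ := if b then 1 else -1
def bw (p : ℝ) (b : Bool) : ℝ := if b then 1 - p else p
def sfun (p : ℝ) (x : ℤ) : ℝ := Real.exp ((x : ℝ) * (Real.log (p / (1 - p)) / 2))
def uval (p : ℝ) : ℝ := 2 * Real.sqrt (p * (1 - p))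

lemma bw_nonneg {p : ℝ} (h0 : 0 < p) (h2 : p < 1/2) (b : Bool) : 0 ≤ bw p b := by
  cases b <;> simp [bw] <;> linarith

lemma uval_pos {p : ℝ} (h0 : 0 < p) (h2 : p < 1/2) : 0 < uval p := by
  have : 0 < p * (1 - p) := mul_pos h0 (by linarith)
  simpa [uval] using Real.sqrt_pos.2 this

lemma uval_sq {p : ℝ} (h0 : 0 < p) (h2 : p < 1/2) : uval p ^ 2 = 4 * (p * (1 - p)) := by
  have h : (0:ℝ) ≤ p * (1 - p) := le_of_lt (mul_pos h0 (by linarith))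
  rw [uval, mul_pow, Real.sq_sqrt h]; ring

lemma uval_lt_one {p : ℝ} (h0 : 0 < p) (h2 : p < 1/2) : uval p < 1 := by
  have hsq := uval_sq h0 h2
  have hpos := uval_pos h0 h2
  nlinarith [hpos, hsq]

lemma sfun_one {p : ℝ} (h0 : 0 < p) (h2 : p < 1/2) : sfun p 1 = Real.sqrt (p / (1 - p)) := by
  have hr : 0 < p / (1 - p) := div_pos h0 (by linarith)
  rw [sfun, ← Real.log_sqrt hr.le]
  simp [Real.exp_log (Real.sqrt_pos.2 hr)]

lemma sfun_neg_one {p : ℝ} (h0 : 0 < p) (h2 : p < 1/2) :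
    sfun p (-1) = (Real.sqrt (p / (1 - p)))⁻¹ := by
  have hr : 0 < p / (1 - p) := div_pos h0 (by linarith)
  rw [sfun, ← Real.log_sqrt hr.le]
  push_cast
  rw [neg_one_mul, Real.exp_neg, Real.exp_log (Real.sqrt_pos.2 hr)]

lemma key_step {p : ℝ} (h0 : 0 < p) (h2 : p < 1/2) :
    bw p true * sfun p (bstep true) + bw p false * sfun p (bstep false) = uval p := by
  have h1p : (0:ℝ) < 1 - p := by linarith
  rw [show bstep true = 1 from rfl, show bstep false = -1 from rfl, sfun_one h0 h2,
    sfun_neg_one h0 h2]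
  have hs : Real.sqrt (p / (1 - p)) = Real.sqrt p / Real.sqrt (1 - p) :=
    Real.sqrt_div h0.le _
  rw [hs]
  have hsp : 0 < Real.sqrt p := Real.sqrt_pos.2 h0
  have hsq : 0 < Real.sqrt (1 - p) := Real.sqrt_pos.2 h1p
  have m1 : Real.sqrt (1 - p) * Real.sqrt (1 - p) = 1 - p := Real.mul_self_sqrt h1p.le
  have m2 : Real.sqrt p * Real.sqrt p = p := Real.mul_self_sqrt h0.le
  have e1 : (1 - p) * (Real.sqrt p / Real.sqrt (1 - p)) = Real.sqrt p * Real.sqrt (1 - p) := by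
    rw [show (1 - p) * (Real.sqrt p / Real.sqrt (1 - p))
        = Real.sqrt p * ((1 - p) / Real.sqrt (1 - p)) by ring, Real.div_sqrt]
  have e2 : p * (Real.sqrt p / Real.sqrt (1 - p))⁻¹ = Real.sqrt p * Real.sqrt (1 - p) := by
    rw [inv_div, show p * (Real.sqrt (1 - p) / Real.sqrt p)
        = Real.sqrt (1 - p) * (p / Real.sqrt p) by ring, Real.div_sqrt]
    ring
  rw [bw, bw, if_pos rfl, if_neg (by simp), e1, e2, uval, ← Real.sqrt_mul h0.le]
  ring

lemma uval_key {p : ℝ} (h0 : 0 < p) (h2 : p < 1/2) (x : ℤ) :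
    bw p true * sfun p (x + bstep true) + bw p false * sfun p (x + bstep false)
      = uval p * sfun p x := by
  have := key_step h0 h2
  have ha : ∀ y : ℤ, sfun p (x + y) = sfun p x * sfun p y := by
    intro y; rw [sfun, sfun, sfun, ← Real.exp_add]; push_cast; ring_nf
  rw [ha, ha]; linear_combination sfun p x * this

lemma dhalf_log {p : ℝ} (h0 : 0 < p) (h2 : p < 1/2) :
    (1/2) * Real.log ((1/2)/p) + (1/2) * Real.log ((1/2)/(1-p)) = - Real.log (uval p) := by
  have h1p : (0:ℝ) < 1 - p := by linarith
  have hpp : 0 < p * (1 - p) := mul_pos h0 h1p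
  rw [uval, Real.log_mul two_ne_zero (Real.sqrt_pos.2 hpp).ne', Real.log_sqrt hpp.le,
    Real.log_mul h0.ne' h1p.ne',
    Real.log_div (by norm_num) h0.ne', Real.log_div (by norm_num) h1p.ne',
    show Real.log (1/2) = - Real.log 2 by rw [one_div, Real.log_inv]]
  ring

def psum {N : ℕ} (ε : Fin N → Bool) (m : ℕ) : ℤ :=
  ∑ i ∈ Finset.range m, if h : i < N then bstep (ε ⟨i, h⟩) else 0

def pW (p : ℝ) {N : ℕ} (ε : Fin N → Bool) : ℝ := ∏ i, bw p (ε i)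

lemma psum_snoc_of_le {N : ℕ} (ε : Fin N → Bool) (b : Bool) {m : ℕ} (hm : m ≤ N) :
    psum (Fin.snoc ε b) m = psum ε m := by
  unfold psum
  refine Finset.sum_congr rfl fun i hi => ?_
  have hiN : i < N := lt_of_lt_of_le (Finset.mem_range.1 hi) hm
  rw [dif_pos hiN, dif_pos (Nat.lt_succ_of_lt hiN)]
  have : (⟨i, Nat.lt_succ_of_lt hiN⟩ : Fin (N+1)) = Fin.castSucc ⟨i, hiN⟩ := rfl
  rw [this, Fin.snoc_castSucc]

lemma psum_snoc_last {N : ℕ} (ε : Fin N → Bool) (b : Bool) :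
    psum (Fin.snoc ε b) (N + 1) = psum ε N + bstep b := by
  unfold psum
  rw [Finset.sum_range_succ, dif_pos (Nat.lt_succ_self N)]
  have h1 : (⟨N, Nat.lt_succ_self N⟩ : Fin (N+1)) = Fin.last N := rfl
  rw [h1, Fin.snoc_last]
  congr 1
  refine Finset.sum_congr rfl fun i hi => ?_
  have hiN : i < N := Finset.mem_range.1 hi
  rw [dif_pos hiN, dif_pos (Nat.lt_succ_of_lt hiN)]
  have : (⟨i, Nat.lt_succ_of_lt hiN⟩ : Fin (N+1)) = Fin.castSucc ⟨i, hiN⟩ := rfl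
  rw [this, Fin.snoc_castSucc]

lemma psum_eq_sum_univ {N : ℕ} (ε : Fin N → Bool) :
    psum ε N = ∑ i : Fin N, bstep (ε i) := by
  rw [psum, Finset.sum_range fun i => _]
  · exact Finset.sum_congr rfl fun i _ => by rw [dif_pos i.isLt]

lemma pW_snoc (p : ℝ) {N : ℕ} (ε : Fin N → Bool) (b : Bool) :
    pW p (Fin.snoc ε b) = pW p ε * bw p b := by
  rw [pW, Fin.prod_univ_castSucc]
  simp [pW]


lemma sfun_sum (p : ℝ) {α : Type*} (s : Finset α) (f : α → ℤ) :
    sfun p (∑ i ∈ s, f i) = ∏ i ∈ s, sfun p (f i) := by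
  simp only [sfun]
  rw [← Real.exp_sum]
  congr 1
  push_cast
  rw [Finset.sum_mul]

def hits (n : ℕ) {N : ℕ} (ε : Fin N → Bool) : Prop := ∃ m ∈ Finset.Ioc n N, psum ε m = 0

instance (n : ℕ) {N : ℕ} (ε : Fin N → Bool) : Decidable (hits n ε) :=
  inferInstanceAs (Decidable (∃ m ∈ Finset.Ioc n N, psum ε m = 0))

lemma hits_snoc (n : ℕ) {N : ℕ} (ε : Fin N → Bool) (b : Bool) (hn : n ≤ N) :
    hits n (Fin.snoc ε b : Fin (N+1) → Bool) ↔ hits n ε ∨ psum ε N + bstep b = 0 := by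
  constructor
  · rintro ⟨m, hm, hz⟩
    rw [Finset.mem_Ioc] at hm
    rcases lt_or_eq_of_le hm.2 with h | h
    · have hmN : m ≤ N := Nat.lt_succ_iff.1 h
      exact Or.inl ⟨m, Finset.mem_Ioc.2 ⟨hm.1, hmN⟩, by rwa [psum_snoc_of_le ε b hmN] at hz⟩
    · subst h
      rw [psum_snoc_last] at hz
      exact Or.inr hz
  · rintro (⟨m, hm, hz⟩ | h)
    · rw [Finset.mem_Ioc] at hm
      exact ⟨m, Finset.mem_Ioc.2 ⟨hm.1, Nat.le_succ_of_le hm.2⟩,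
        by rwa [psum_snoc_of_le ε b hm.2]⟩
    · exact ⟨N + 1, Finset.mem_Ioc.2 ⟨Nat.lt_succ_of_le hn, le_refl _⟩,
        by rwa [psum_snoc_last]⟩

lemma pW_nonneg {p : ℝ} (h0 : 0 < p) (h2 : p < 1/2) {N : ℕ} (ε : Fin N → Bool) : 0 ≤ pW p ε :=
  Finset.prod_nonneg fun i _ => by cases ε i <;> simp [bw] <;> linarith

lemma core_base {p : ℝ} (h0 : 0 < p) (h2 : p < 1/2) (n : ℕ) :
    ∑ ε : Fin n → Bool, pW p ε * sfun p (psum ε n) = uval p ^ n := by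
  have hterm : ∀ ε : Fin n → Bool,
      pW p ε * sfun p (psum ε n) = ∏ i : Fin n, (bw p (ε i) * sfun p (bstep (ε i))) := by
    intro ε
    rw [psum_eq_sum_univ, sfun_sum, pW, ← Finset.prod_mul_distrib]
  calc ∑ ε : Fin n → Bool, pW p ε * sfun p (psum ε n)
      = ∑ ε : Fin n → Bool, ∏ i : Fin n, (bw p (ε i) * sfun p (bstep (ε i))) :=
        Finset.sum_congr rfl fun ε _ => hterm ε
    _ = ∏ i : Fin n, ∑ b : Bool, (bw p b * sfun p (bstep b)) := by
        rw [Finset.prod_univ_sum (fun _ : Fin n => (Finset.univ : Finset Bool))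
          (fun _ b => bw p b * sfun p (bstep b)), Fintype.piFinset_univ]
    _ = uval p ^ n := by
        rw [Finset.prod_congr rfl (fun i _ => by rw [Fintype.sum_bool, key_step h0 h2]),
          Finset.prod_const, Finset.card_univ, Fintype.card_fin]

lemma core {p : ℝ} (h0 : 0 < p) (h2 : p < 1/2) (n : ℕ) :
    ∀ N, n ≤ N →
    ∑ ε : Fin N → Bool, pW p ε * (if hits n ε then 1 else sfun p (psum ε N)) ≤ uval p ^ n := by
  refine Nat.le_induction ?_ ?_
  · have hh : ∀ ε : Fin n → Bool, ¬ hits n ε := by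
      rintro ε ⟨m, hm, -⟩
      rw [Finset.mem_Ioc] at hm
      omega
    rw [Finset.sum_congr rfl fun ε _ => by rw [if_neg (hh ε)]]
    exact le_of_eq (core_base h0 h2 n)
  · intro N hnN ih
    refine le_trans ?_ ih
    have hre : ∑ ε : Fin (N+1) → Bool, pW p ε * (if hits n ε then 1 else sfun p (psum ε (N+1)))
        = ∑ x : Bool × (Fin N → Bool),
            pW p (Fin.snoc x.2 x.1 : Fin (N+1) → Bool) *
              (if hits n (Fin.snoc x.2 x.1 : Fin (N+1) → Bool) then 1
               else sfun p (psum (Fin.snoc x.2 x.1 : Fin (N+1) → Bool) (N+1))) := by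
      refine (Fintype.sum_equiv (Fin.snocEquiv (fun _ => Bool)) _ _ fun x => ?_).symm
      rfl
    rw [hre, Fintype.sum_prod_type_right]
    refine Finset.sum_le_sum fun ε _ => ?_
    have hW : 0 ≤ pW p ε := pW_nonneg h0 h2 ε
    by_cases hA : hits n ε
    · rw [Fintype.sum_bool]
      rw [if_pos ((hits_snoc n ε true hnN).2 (Or.inl hA)),
        if_pos ((hits_snoc n ε false hnN).2 (Or.inl hA)), if_pos hA,
        pW_snoc, pW_snoc]
      have hba : bw p true + bw p false = 1 := by simp [bw]
      nlinarith [hW, hba]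
    · have hb : ∀ b : Bool,
          pW p (Fin.snoc ε b : Fin (N+1) → Bool) *
            (if hits n (Fin.snoc ε b : Fin (N+1) → Bool) then 1
             else sfun p (psum (Fin.snoc ε b : Fin (N+1) → Bool) (N+1)))
          = pW p ε * (bw p b * sfun p (psum ε N + bstep b)) := by
        intro b
        rw [pW_snoc, psum_snoc_last]
        by_cases hz : psum ε N + bstep b = 0
        · rw [if_pos ((hits_snoc n ε b hnN).2 (Or.inr hz)), hz]
          rw [show sfun p 0 = 1 by simp [sfun]]
          ring
        · rw [if_neg (by rw [hits_snoc n ε b hnN]; tauto)]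
          ring
      rw [Fintype.sum_bool, hb, hb, if_neg hA, ← mul_add,
        show psum ε N + bstep true = psum ε N + bstep true from rfl]
      have hk := uval_key h0 h2 (psum ε N)
      rw [hk]
      have hu1 : uval p ≤ 1 := le_of_lt (uval_lt_one h0 h2)
      have hs : 0 < sfun p (psum ε N) := Real.exp_pos _
      nlinarith [mul_nonneg (mul_nonneg hW hs.le) (by linarith : (0:ℝ) ≤ 1 - uval p)]

def cyl (Y : ℕ → Ω → ℤ) {N : ℕ} (ε : Fin N → Bool) : Set Ω :=
  {ω | ∀ i : Fin N, Y i ω = bstep (ε i)}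

def patN (Y : ℕ → Ω → ℤ) (N : ℕ) (ω : Ω) : Fin N → Bool := fun i => decide (Y i ω = 1)

lemma cyl_measurable (Y : ℕ → Ω → ℤ) (hmeas : ∀ i, Measurable (Y i)) {N : ℕ}
    (ε : Fin N → Bool) : MeasurableSet (cyl Y ε) := by
  have : cyl Y ε = ⋂ i : Fin N, Y i ⁻¹' {bstep (ε i)} := by
    ext ω; simp [cyl]
  rw [this]
  exact MeasurableSet.iInter fun i => (hmeas i) (measurableSet_singleton _)

lemma mem_cyl_patN (Y : ℕ → Ω → ℤ) (hrange : ∀ i ω, Y i ω = 1 ∨ Y i ω = -1) (N : ℕ) (ω : Ω) :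
    ω ∈ cyl Y (patN Y N ω) := by
  intro i
  rcases hrange i ω with h | h
  · simp [patN, h, bstep]
  · have : ¬ (Y i ω = 1) := by rw [h]; decide
    simp [patN, h, this, bstep]

lemma patN_eq_of_mem_cyl (Y : ℕ → Ω → ℤ) {N : ℕ} {ε : Fin N → Bool} {ω : Ω}
    (h : ω ∈ cyl Y ε) : patN Y N ω = ε := by
  funext i
  have hi := h i
  cases hb : ε i
  · rw [hb] at hi
    have h1 : Y i ω ≠ 1 := by rw [hi]; decide
    simp [patN, h1]
  · rw [hb] at hi
    have h1 : Y i ω = 1 := hi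
    simp [patN, h1]

lemma meas_Y_true (μ : Measure Ω) [IsProbabilityMeasure μ] {p : ℝ}
    (Y : ℕ → Ω → ℤ) (hdist : ∀ i, μ {ω | Y i ω = 1} = ENNReal.ofReal (1 - p)) (i : ℕ) :
    μ (Y i ⁻¹' {1}) = ENNReal.ofReal (1 - p) := by
  rw [← hdist i]; rfl

lemma meas_Y_false (μ : Measure Ω) [IsProbabilityMeasure μ] {p : ℝ}
    (hp0 : 0 < p) (hp2 : p < 1/2)
    (Y : ℕ → Ω → ℤ) (hmeas : ∀ i, Measurable (Y i))
    (hrange : ∀ i ω, Y i ω = 1 ∨ Y i ω = -1)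
    (hdist : ∀ i, μ {ω | Y i ω = 1} = ENNReal.ofReal (1 - p)) (i : ℕ) :
    μ (Y i ⁻¹' {-1}) = ENNReal.ofReal p := by
  have hcompl : Y i ⁻¹' {-1} = (Y i ⁻¹' {1})ᶜ := by
    ext ω
    rcases hrange i ω with h | h <;> simp [h]
  rw [hcompl, measure_compl ((hmeas i) (measurableSet_singleton _)) (measure_ne_top μ _),
    measure_univ, meas_Y_true μ Y hdist i]
  rw [← ENNReal.ofReal_one, ← ENNReal.ofReal_sub _ (by linarith : (0:ℝ) ≤ 1 - p)]
  norm_num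

lemma meas_cyl (μ : Measure Ω) [IsProbabilityMeasure μ] {p : ℝ}
    (hp0 : 0 < p) (hp2 : p < 1/2)
    (Y : ℕ → Ω → ℤ) (hmeas : ∀ i, Measurable (Y i))
    (hrange : ∀ i ω, Y i ω = 1 ∨ Y i ω = -1)
    (hdist : ∀ i, μ {ω | Y i ω = 1} = ENNReal.ofReal (1 - p))
    (hindep : iIndepFun Y μ)
    {N : ℕ} (ε : Fin N → Bool) :
    μ (cyl Y ε) = ENNReal.ofReal (pW p ε) := by
  classical
  set St : ℕ → Set ℤ := fun i => if h : i < N then {bstep (ε ⟨i, h⟩)} else Set.univ with hSt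
  have hsets : ∀ i ∈ Finset.range N, MeasurableSet (St i) := by
    intro i _
    by_cases h : i < N
    · simp [hSt, h]
    · simp [hSt, h]
  have hEq : cyl Y ε = ⋂ i ∈ Finset.range N, Y i ⁻¹' St i := by
    ext ω
    simp only [cyl, Set.mem_setOf_eq, Set.mem_iInter, Finset.mem_range]
    constructor
    · intro h i hi
      simp [hSt, hi, h ⟨i, hi⟩]
    · intro h i
      have := h i.1 i.2
      simpa [hSt, i.2] using this
  rw [hEq, hindep.measure_inter_preimage_eq_mul (Finset.range N) hsets]
  have hterm : ∀ i ∈ Finset.range N, μ (Y i ⁻¹' St i)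
      = ENNReal.ofReal (if h : i < N then bw p (ε ⟨i, h⟩) else 1) := by
    intro i hi
    have h : i < N := Finset.mem_range.1 hi
    rw [dif_pos h]
    simp only [hSt, dif_pos h]
    cases hb : ε ⟨i, h⟩
    · rw [show bstep false = -1 from rfl, meas_Y_false μ hp0 hp2 Y hmeas hrange hdist i]
      simp [bw]
    · rw [show bstep true = 1 from rfl, meas_Y_true μ Y hdist i]
      simp [bw]
  rw [Finset.prod_congr rfl hterm,
    ← ENNReal.ofReal_prod_of_nonneg (fun i hi => by
      have h : i < N := Finset.mem_range.1 hi
      rw [dif_pos h]; exact bw_nonneg hp0 hp2 _)]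
  congr 1
  rw [pW, ← Fin.prod_univ_eq_prod_range (fun i => _) N]
  · exact Finset.prod_congr rfl fun i _ => by rw [dif_pos i.isLt]

lemma meas_pattern (μ : Measure Ω) [IsProbabilityMeasure μ] {p : ℝ}
    (hp0 : 0 < p) (hp2 : p < 1/2)
    (Y : ℕ → Ω → ℤ) (hmeas : ∀ i, Measurable (Y i))
    (hrange : ∀ i ω, Y i ω = 1 ∨ Y i ω = -1)
    (hdist : ∀ i, μ {ω | Y i ω = 1} = ENNReal.ofReal (1 - p))
    (hindep : iIndepFun Y μ)
    (N : ℕ) (Q : (Fin N → Bool) → Prop) [DecidablePred Q] :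
    μ {ω | Q (patN Y N ω)}
      = ENNReal.ofReal (∑ ε ∈ Finset.univ.filter Q, pW p ε) := by
  have hEq : {ω | Q (patN Y N ω)} = ⋃ ε ∈ Finset.univ.filter Q, cyl Y ε := by
    ext ω
    simp only [Set.mem_setOf_eq, Set.mem_iUnion, Finset.mem_filter, Finset.mem_univ, true_and]
    constructor
    · intro h
      exact ⟨patN Y N ω, h, mem_cyl_patN Y hrange N ω⟩
    · rintro ⟨ε, hQ, hc⟩
      rwa [patN_eq_of_mem_cyl Y hc]
  rw [hEq, measure_biUnion_finset ?_ (fun ε _ => cyl_measurable Y hmeas ε)]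
  · rw [Finset.sum_congr rfl fun ε _ => meas_cyl μ hp0 hp2 Y hmeas hrange hdist hindep ε,
      ← ENNReal.ofReal_sum_of_nonneg fun ε _ => pW_nonneg hp0 hp2 ε]
  · intro ε hε ε' hε' hne
    simp only [Function.onFun]
    refine Set.disjoint_left.2 fun ω hω hω' => hne ?_
    rw [← patN_eq_of_mem_cyl Y hω, ← patN_eq_of_mem_cyl Y hω']

lemma walk_eq_psum (Y : ℕ → Ω → ℤ) (hrange : ∀ i ω, Y i ω = 1 ∨ Y i ω = -1)
    {N m : ℕ} (hm : m ≤ N) (ω : Ω) :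
    walk Y m ω = psum (patN Y N ω) m := by
  unfold walk psum
  refine Finset.sum_congr rfl fun i hi => ?_
  have hiN : i < N := lt_of_lt_of_le (Finset.mem_range.1 hi) hm
  rw [dif_pos hiN]
  rcases hrange i ω with h | h
  · simp [patN, h, bstep]
  · have h1 : Y i ω ≠ 1 := by rw [h]; decide
    simp [patN, h1, bstep, h]

lemma upper_fin (μ : Measure Ω) [IsProbabilityMeasure μ] {p : ℝ}
    (hp0 : 0 < p) (hp2 : p < 1/2)
    (Y : ℕ → Ω → ℤ) (hmeas : ∀ i, Measurable (Y i))
    (hrange : ∀ i ω, Y i ω = 1 ∨ Y i ω = -1)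
    (hdist : ∀ i, μ {ω | Y i ω = 1} = ENNReal.ofReal (1 - p))
    (hindep : iIndepFun Y μ)
    {n N : ℕ} (hnN : n ≤ N) :
    μ {ω | ∃ m, n < m ∧ m ≤ N ∧ walk Y m ω = 0} ≤ ENNReal.ofReal (uval p ^ n) := by
  classical
  have hEq : {ω | ∃ m, n < m ∧ m ≤ N ∧ walk Y m ω = 0}
      = {ω | hits n (patN Y N ω)} := by
    ext ω
    simp only [Set.mem_setOf_eq, hits, Finset.mem_Ioc]
    constructor
    · rintro ⟨m, h1, h2, h3⟩
      exact ⟨m, ⟨h1, h2⟩, by rw [← walk_eq_psum Y hrange h2]; exact h3⟩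
    · rintro ⟨m, ⟨h1, h2⟩, h3⟩
      exact ⟨m, h1, h2, by rw [walk_eq_psum Y hrange h2]; exact h3⟩
  rw [hEq, meas_pattern μ hp0 hp2 Y hmeas hrange hdist hindep N (hits n)]
  refine ENNReal.ofReal_le_ofReal ?_
  calc ∑ ε ∈ Finset.univ.filter (hits n), pW p ε
      = ∑ ε ∈ Finset.univ.filter (hits n),
          pW p ε * (if hits n ε then 1 else sfun p (psum ε N)) := by
        refine Finset.sum_congr rfl fun ε hε => ?_
        rw [if_pos (Finset.mem_filter.1 hε).2, mul_one]
    _ ≤ ∑ ε : Fin N → Bool, pW p ε * (if hits n ε then 1 else sfun p (psum ε N)) := by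
        refine Finset.sum_le_sum_of_subset_of_nonneg (Finset.filter_subset _ _)
          fun ε _ _ => mul_nonneg (pW_nonneg hp0 hp2 ε) ?_
        by_cases h : hits n ε
        · rw [if_pos h]; norm_num
        · rw [if_neg h]; exact (Real.exp_pos _).le
    _ ≤ uval p ^ n := core hp0 hp2 n N hnN

lemma upper_bd (μ : Measure Ω) [IsProbabilityMeasure μ] {p : ℝ}
    (hp0 : 0 < p) (hp2 : p < 1/2)
    (Y : ℕ → Ω → ℤ) (hmeas : ∀ i, Measurable (Y i))
    (hrange : ∀ i ω, Y i ω = 1 ∨ Y i ω = -1)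
    (hdist : ∀ i, μ {ω | Y i ω = 1} = ENNReal.ofReal (1 - p))
    (hindep : iIndepFun Y μ)
    (n : ℕ) :
    μ {ω | ∃ m, n < m ∧ walk Y m ω = 0} ≤ ENNReal.ofReal (uval p ^ n) := by
  have hEq : {ω | ∃ m, n < m ∧ walk Y m ω = 0}
      = ⋃ N : ℕ, {ω | ∃ m, n < m ∧ m ≤ N ∧ walk Y m ω = 0} := by
    ext ω
    simp only [Set.mem_setOf_eq, Set.mem_iUnion]
    constructor
    · rintro ⟨m, h1, h2⟩; exact ⟨m, m, h1, le_refl _, h2⟩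
    · rintro ⟨N, m, h1, h2, h3⟩; exact ⟨m, h1, h3⟩
  have hmono : Monotone fun N : ℕ => {ω | ∃ m, n < m ∧ m ≤ N ∧ walk Y m ω = 0} := by
    intro N N' hNN' ω
    rintro ⟨m, h1, h2, h3⟩
    exact ⟨m, h1, le_trans h2 hNN', h3⟩
  rw [hEq, hmono.measure_iUnion]
  refine iSup_le fun N => ?_
  rcases le_or_gt n N with h | h
  · exact upper_fin μ hp0 hp2 Y hmeas hrange hdist hindep h
  · refine le_trans (measure_mono ?_) (upper_fin μ hp0 hp2 Y hmeas hrange hdist hindep (le_refl n))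
    rintro ω ⟨m, h1, h2, h3⟩
    exact ⟨m, h1, le_trans h2 h.le, h3⟩

lemma psum_card {M : ℕ} (ε : Fin M → Bool) :
    psum ε M = 2 * ((Finset.univ.filter fun i => ε i = true).card : ℤ) - M := by
  classical
  rw [psum_eq_sum_univ]
  rw [← Finset.sum_filter_add_sum_filter_not Finset.univ (fun i => ε i = true)]
  have e1 : ∀ i ∈ Finset.univ.filter (fun i : Fin M => ε i = true), bstep (ε i) = 1 :=
    fun i hi => by rw [(Finset.mem_filter.1 hi).2]; rfl
  have e2 : ∀ i ∈ Finset.univ.filter (fun i : Fin M => ¬ ε i = true), bstep (ε i) = -1 := by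
    intro i hi
    have hf : ε i = false := by
      cases h : ε i
      · rfl
      · exact absurd h (Finset.mem_filter.1 hi).2
    rw [hf]; rfl
  rw [Finset.sum_congr rfl e1, Finset.sum_congr rfl e2, Finset.sum_const, Finset.sum_const,
    nsmul_eq_mul, nsmul_eq_mul, mul_one]
  have h3 := Finset.card_filter_add_card_filter_not (s := (Finset.univ : Finset (Fin M)))
    (p := fun i => ε i = true)
  rw [Finset.card_univ, Fintype.card_fin] at h3
  omega

lemma pW_card {p : ℝ} {M : ℕ} (ε : Fin M → Bool) :
    pW p ε = (1 - p) ^ ((Finset.univ.filter fun i => ε i = true).card)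
      * p ^ (M - (Finset.univ.filter fun i => ε i = true).card) := by
  classical
  rw [pW, ← Finset.prod_filter_mul_prod_filter_not Finset.univ (fun i => ε i = true)]
  have e1 : ∀ i ∈ Finset.univ.filter (fun i : Fin M => ε i = true), bw p (ε i) = 1 - p :=
    fun i hi => by rw [(Finset.mem_filter.1 hi).2]; rfl
  have e2 : ∀ i ∈ Finset.univ.filter (fun i : Fin M => ¬ ε i = true), bw p (ε i) = p := by
    intro i hi
    have hf : ε i = false := by
      cases h : ε i
      · rfl
      · exact absurd h (Finset.mem_filter.1 hi).2
    rw [hf]; rfl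
  rw [Finset.prod_congr rfl e1, Finset.prod_congr rfl e2, Finset.prod_const, Finset.prod_const]
  have h3 := Finset.card_filter_add_card_filter_not (s := (Finset.univ : Finset (Fin M)))
    (p := fun i => ε i = true)
  rw [Finset.card_univ, Fintype.card_fin] at h3
  have hd : (Finset.univ.filter (fun i : Fin M => ¬ ε i = true)).card
      = M - (Finset.univ.filter fun i : Fin M => ε i = true).card := by omega
  rw [hd]

lemma choose_lower (k : ℕ) : 4 ^ k ≤ (2 * k + 1) * (2 * k).choose k := by
  have h1 : ∑ i ∈ Finset.range (2 * k + 1), (2 * k).choose i = 2 ^ (2 * k) :=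
    Nat.sum_range_choose (2 * k)
  have h2 : ∑ i ∈ Finset.range (2 * k + 1), (2 * k).choose i
      ≤ (2 * k + 1) * (2 * k).choose k := by
    calc ∑ i ∈ Finset.range (2 * k + 1), (2 * k).choose i
        ≤ ∑ _i ∈ Finset.range (2 * k + 1), (2 * k).choose k := by
          refine Finset.sum_le_sum fun i _ => ?_
          have := Nat.choose_le_middle i (2 * k)
          simpa [Nat.mul_div_cancel_left k] using this
      _ = (2 * k + 1) * (2 * k).choose k := by
          rw [Finset.sum_const, Finset.card_range, smul_eq_mul]
    
  calc 4 ^ k = 2 ^ (2 * k) := by rw [pow_mul]; norm_num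
    _ ≤ _ := h1 ▸ h2

lemma sum_lower {p : ℝ} (hp0 : 0 < p) (hp2 : p < 1/2) (k : ℕ) :
    (((2*k).choose k : ℝ)) * ((1 - p) ^ k * p ^ k)
      ≥ uval p ^ (2*k) / (2*(k:ℝ)+1) := by
  classical
  have hc0 : 0 < p * (1 - p) := mul_pos hp0 (by linarith)
  have husq : uval p ^ 2 = 4 * (p * (1-p)) := uval_sq hp0 hp2
  have e1 : (1-p)^k * p^k = (p*(1-p))^k := by rw [← mul_pow]; ring_nf
  have e2 : (4:ℝ)^k * (p*(1-p))^k = uval p ^ (2*k) := by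
    rw [← mul_pow, ← husq, ← pow_mul]
  have hcast : (4:ℝ)^k ≤ (2*(k:ℝ)+1) * (((2*k).choose k : ℕ) : ℝ) := by
    have := choose_lower k
    have : ((4^k : ℕ) : ℝ) ≤ (((2*k+1) * (2*k).choose k : ℕ) : ℝ) := by exact_mod_cast this
    push_cast at this
    linarith
  rw [ge_iff_le, div_le_iff₀ (by positivity)]
  calc uval p ^ (2*k) = (4:ℝ)^k * (p*(1-p))^k := e2.symm
    _ ≤ ((2*(k:ℝ)+1) * (((2*k).choose k : ℕ) : ℝ)) * (p*(1-p))^k := by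
        have := pow_nonneg hc0.le k
        nlinarith [hcast, this]
    _ = ((2*k).choose k : ℝ) * ((1-p)^k * p^k) * (2*(k:ℝ)+1) := by rw [e1]; ring

lemma lower_bd (μ : Measure Ω) [IsProbabilityMeasure μ] {p : ℝ}
    (hp0 : 0 < p) (hp2 : p < 1/2)
    (Y : ℕ → Ω → ℤ) (hmeas : ∀ i, Measurable (Y i))
    (hrange : ∀ i ω, Y i ω = 1 ∨ Y i ω = -1)
    (hdist : ∀ i, μ {ω | Y i ω = 1} = ENNReal.ofReal (1 - p))
    (hindep : iIndepFun Y μ)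
    (n : ℕ) :
    ENNReal.ofReal (uval p ^ n * (p * (1 - p) * (1 - 2*p)) / ((n:ℝ) + 1))
      ≤ μ {ω | ∃ m, n < m ∧ walk Y m ω = 0} := by
  classical
  set k : ℕ := n / 2 + 1 with hk
  set M : ℕ := 2 * k with hMdef
  have hM1 : n < M := by omega
  have hM2 : M ≤ n + 2 := by omega
  have hsub : {ω | walk Y M ω = 0} ⊆ {ω | ∃ m, n < m ∧ walk Y m ω = 0} :=
    fun ω h => ⟨M, hM1, h⟩
  refine le_trans ?_ (measure_mono hsub)
  have hEq : {ω | walk Y M ω = 0} = {ω | (fun ε : Fin M → Bool => psum ε M = 0) (patN Y M ω)} := by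
    ext ω
    simp only [Set.mem_setOf_eq]
    rw [walk_eq_psum Y hrange (le_refl M)]
  rw [hEq, meas_pattern μ hp0 hp2 Y hmeas hrange hdist hindep M
    (fun ε : Fin M → Bool => psum ε M = 0)]
  refine ENNReal.ofReal_le_ofReal ?_
  -- lower bound the sum by the binomial count
  set emb : Finset (Fin M) → (Fin M → Bool) := fun S i => decide (i ∈ S) with hemb
  have hfilter : ∀ S : Finset (Fin M), (Finset.univ.filter fun i => emb S i = true) = S := by
    intro S; ext i; simp [hemb]
  have hinj : Set.InjOn emb ((Finset.powersetCard k (Finset.univ : Finset (Fin M)) : Finset (Finset (Fin M))) : Set (Finset (Fin M))) := by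
    intro S _ S' _ h
    have := congrArg (fun ε => Finset.univ.filter fun i => ε i = true) h
    simpa [hfilter] using this
  have hsubset : (Finset.powersetCard k Finset.univ).image emb
      ⊆ Finset.univ.filter (fun ε : Fin M → Bool => psum ε M = 0) := by
    intro ε hε
    rcases Finset.mem_image.1 hε with ⟨S, hS, rfl⟩
    have hcard : S.card = k := (Finset.mem_powersetCard.1 hS).2
    refine Finset.mem_filter.2 ⟨Finset.mem_univ _, ?_⟩
    rw [psum_card, hfilter, hcard]
    omega
  have hsum1 : ∑ ε ∈ (Finset.powersetCard k Finset.univ).image emb, pW p ε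
      ≤ ∑ ε ∈ Finset.univ.filter (fun ε : Fin M → Bool => psum ε M = 0), pW p ε :=
    Finset.sum_le_sum_of_subset_of_nonneg hsubset fun ε _ _ => pW_nonneg hp0 hp2 ε
  have hsum2 : ∑ ε ∈ (Finset.powersetCard k Finset.univ).image emb, pW p ε
      = (M.choose k : ℝ) * ((1-p)^k * p^k) := by
    rw [Finset.sum_image (fun S hS S' hS' h => hinj hS hS' h)]
    have hterm : ∀ S ∈ Finset.powersetCard k Finset.univ, pW p (emb S) = (1-p)^k * p^k := by
      intro S hS
      have hcard : S.card = k := (Finset.mem_powersetCard.1 hS).2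
      rw [pW_card, hfilter, hcard]
      congr 2
      omega
    rw [Finset.sum_congr rfl hterm, Finset.sum_const, Finset.card_powersetCard,
      Finset.card_univ, Fintype.card_fin, nsmul_eq_mul]
  have hlow := sum_lower hp0 hp2 k
  have hu : 0 < uval p := uval_pos hp0 hp2
  have hu1 : uval p ≤ 1 := (uval_lt_one hp0 hp2).le
  have hc0 : 0 < p * (1 - p) := mul_pos hp0 (by linarith)
  have husq : uval p ^ 2 = 4 * (p * (1-p)) := uval_sq hp0 hp2
  have hB : uval p ^ n * (4 * (p*(1-p))) ≤ uval p ^ (2*k) := by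
    have h1 : uval p ^ (n+2) ≤ uval p ^ (2*k) :=
      pow_le_pow_of_le_one hu.le hu1 (by omega)
    calc uval p ^ n * (4 * (p*(1-p))) = uval p ^ n * uval p ^ 2 := by rw [husq]
      _ = uval p ^ (n+2) := (pow_add _ n 2).symm
      _ ≤ uval p ^ (2*k) := h1
  have hk3 : (2*(k:ℝ)+1) ≤ (n:ℝ) + 3 := by
    have : (M:ℝ) ≤ (n:ℝ) + 2 := by exact_mod_cast hM2
    push_cast [hMdef] at this ⊢
    linarith
  calc uval p ^ n * (p * (1 - p) * (1 - 2*p)) / ((n:ℝ) + 1)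
      ≤ uval p ^ n * (4 * (p*(1-p))) / (2*(k:ℝ)+1) := by
        rw [div_le_div_iff₀ (by positivity) (by positivity)]
        have hkey : (1-2*p)*(2*(k:ℝ)+1) ≤ 4*((n:ℝ)+1) := by nlinarith [hk3]
        have hpos : (0:ℝ) ≤ uval p ^ n * (p*(1-p)) :=
          mul_nonneg (pow_nonneg hu.le n) hc0.le
        nlinarith [mul_le_mul_of_nonneg_left hkey hpos]
      _ ≤ uval p ^ (2*k) / (2*(k:ℝ)+1) := by
        apply div_le_div_of_nonneg_right hB
        positivity
      _ ≤ (M.choose k : ℝ) * ((1-p)^k * p^k) := by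
        rw [hMdef]; exact hlow
      _ = ∑ ε ∈ (Finset.powersetCard k Finset.univ).image emb, pW p ε := hsum2.symm
      _ ≤ _ := hsum1

end Aux

/-- For `p ∈ (0,1/2)`, non-asymptotic bounds on `P(B > n)` (where `B` is the
time of the last visit of the walk to `0`, so `B > n` iff `∃ m > n, X_m = 0`), and the resulting
limit `lim_{n→∞} (1/n) log P(B > n) = −D(1/2‖p)`. -/
theorem stmt14
    (μ : Measure Ω) [IsProbabilityMeasure μ]
    (p : ℝ) (hp : p ∈ Set.Ioo (0:ℝ) (1/2))
    (Y : ℕ → Ω → ℤ)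
    (hmeas : ∀ i, Measurable (Y i))
    (hrange : ∀ i ω, Y i ω = 1 ∨ Y i ω = -1)
    (hdist : ∀ i, μ {ω | Y i ω = 1} = ENNReal.ofReal (1 - p))
    (hindep : iIndepFun Y μ) :
    (∀ n : ℕ, 1 ≤ n →
      μ {ω | ∃ m, n < m ∧ walk Y m ω = 0}
          ≤ ENNReal.ofReal (Real.exp (-((n : ℝ) * Dhalf p)) / (1 - 2*p)) ∧
      ENNReal.ofReal (Real.exp (-((n : ℝ) * Dhalf p)) * (p * (1 - p) * (1 - 2*p)) / ((n : ℝ) + 1))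
          ≤ μ {ω | ∃ m, n < m ∧ walk Y m ω = 0}) ∧
    Tendsto
      (fun n : ℕ =>
        Real.log ((μ {ω | ∃ m, n < m ∧ walk Y m ω = 0}).toReal) / (n : ℝ))
      atTop (nhds (-(Dhalf p))) := by
  obtain ⟨hp0, hp2⟩ := hp
  have hu : 0 < uval p := uval_pos hp0 hp2
  have hu1 : uval p < 1 := uval_lt_one hp0 hp2
  have h12 : (0:ℝ) < 1 - 2*p := by linarith
  have hD : Dhalf p = - Real.log (uval p) := by
    unfold Dhalf; exact dhalf_log hp0 hp2
  have hexp : ∀ n : ℕ, Real.exp (-((n : ℝ) * Dhalf p)) = uval p ^ n := by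
    intro n
    rw [hD, show -((n:ℝ) * -Real.log (uval p)) = (n:ℝ) * Real.log (uval p) by ring,
      Real.exp_nat_mul, Real.exp_log hu]
  have hc1 : 0 < p * (1 - p) * (1 - 2*p) :=
    mul_pos (mul_pos hp0 (by linarith : (0:ℝ) < 1 - p)) h12
  have hUp : ∀ n : ℕ, μ {ω | ∃ m, n < m ∧ walk Y m ω = 0}
      ≤ ENNReal.ofReal (uval p ^ n / (1 - 2*p)) := by
    intro n
    refine le_trans (upper_bd μ hp0 hp2 Y hmeas hrange hdist hindep n)
      (ENNReal.ofReal_le_ofReal ?_)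
    rw [le_div_iff₀ h12]
    nlinarith [pow_pos hu n]
  have hLo : ∀ n : ℕ, ENNReal.ofReal (uval p ^ n * (p * (1 - p) * (1 - 2*p)) / ((n:ℝ)+1))
      ≤ μ {ω | ∃ m, n < m ∧ walk Y m ω = 0} :=
    fun n => lower_bd μ hp0 hp2 Y hmeas hrange hdist hindep n
  have hPlo : ∀ n : ℕ, uval p ^ n * (p * (1 - p) * (1 - 2*p)) / ((n:ℝ)+1)
      ≤ (μ {ω | ∃ m, n < m ∧ walk Y m ω = 0}).toReal := by
    intro n
    exact (ENNReal.ofReal_le_iff_le_toReal (measure_ne_top μ _)).1 (hLo n)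
  have hPhi : ∀ n : ℕ, (μ {ω | ∃ m, n < m ∧ walk Y m ω = 0}).toReal
      ≤ uval p ^ n / (1 - 2*p) := by
    intro n
    have := ENNReal.toReal_mono ENNReal.ofReal_ne_top (hUp n)
    rwa [ENNReal.toReal_ofReal (by positivity)] at this
  refine ⟨fun n _ => ⟨by rw [hexp n]; exact hUp n, by rw [hexp n]; exact hLo n⟩, ?_⟩
  -- the limit
  have hgoal : -(Dhalf p) = Real.log (uval p) := by rw [hD]; ring
  rw [hgoal]
  set L : ℕ → ℝ := fun n => Real.log (uval p)
    + Real.log (p * (1 - p) * (1 - 2*p)) / (n:ℝ) - Real.log ((n:ℝ)+1) / (n:ℝ) with hLdef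
  set U : ℕ → ℝ := fun n => Real.log (uval p) - Real.log (1 - 2*p) / (n:ℝ) with hUdef
  have hlog2 : Tendsto (fun n : ℕ => Real.log ((n:ℝ)+1) / (n:ℝ)) atTop (nhds 0) := by
    have h1 : Tendsto (fun x : ℝ => Real.log x / x) atTop (nhds 0) :=
      Real.isLittleO_log_id_atTop.tendsto_div_nhds_zero
    have h2 : Tendsto (fun n : ℕ => Real.log ((n:ℝ)+1) / ((n:ℝ)+1)) atTop (nhds 0) :=
      h1.comp (tendsto_atTop_add_const_right atTop 1 tendsto_natCast_atTop_atTop)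
    have h3 : Tendsto (fun n : ℕ => ((n:ℝ)+1) / (n:ℝ)) atTop (nhds 1) := by
      have h4 : Tendsto (fun n : ℕ => 1 + 1/(n:ℝ)) atTop (nhds 1) := by
        have h5 := (tendsto_const_nhds :
            Tendsto (fun _ : ℕ => (1:ℝ)) atTop (nhds 1)).add
          tendsto_one_div_atTop_nhds_zero_nat
        rw [add_zero] at h5
        exact h5
      refine h4.congr' ?_
      filter_upwards [eventually_ge_atTop 1] with n hn
      have hnR : (0:ℝ) < (n:ℝ) := by exact_mod_cast Nat.pos_of_ne_zero (by omega)
      field_simp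
    have h6 := h2.mul h3
    rw [zero_mul] at h6
    refine h6.congr' ?_
    filter_upwards [eventually_ge_atTop 1] with n hn
    have hnR : (0:ℝ) < (n:ℝ) := by exact_mod_cast Nat.pos_of_ne_zero (by omega)
    field_simp
  have hLlim : Tendsto L atTop (nhds (Real.log (uval p))) := by
    have t1 : Tendsto (fun n : ℕ => Real.log (p * (1 - p) * (1 - 2*p)) / (n:ℝ)) atTop (nhds 0) :=
      tendsto_const_div_atTop_nhds_zero_nat _
    have t2 := ((tendsto_const_nhds :
      Tendsto (fun _ : ℕ => Real.log (uval p)) atTop (nhds (Real.log (uval p)))).add t1).sub hlog2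
    simpa using t2
  have hUlim : Tendsto U atTop (nhds (Real.log (uval p))) := by
    have t1 : Tendsto (fun n : ℕ => Real.log (1 - 2*p) / (n:ℝ)) atTop (nhds 0) :=
      tendsto_const_div_atTop_nhds_zero_nat _
    have t2 := (tendsto_const_nhds :
      Tendsto (fun _ : ℕ => Real.log (uval p)) atTop (nhds (Real.log (uval p)))).sub t1
    simpa using t2
  refine tendsto_of_tendsto_of_tendsto_of_le_of_le' hLlim hUlim ?_ ?_
  · filter_upwards [eventually_ge_atTop 1] with n hn
    have hnR : (0:ℝ) < (n:ℝ) := by exact_mod_cast Nat.pos_of_ne_zero (by omega)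
    have hlo := hPlo n
    have hpos : 0 < uval p ^ n * (p * (1 - p) * (1 - 2*p)) / ((n:ℝ)+1) := by positivity
    have hP0 : 0 < (μ {ω | ∃ m, n < m ∧ walk Y m ω = 0}).toReal := lt_of_lt_of_le hpos hlo
    have hlogle : Real.log (uval p ^ n * (p * (1 - p) * (1 - 2*p)) / ((n:ℝ)+1))
        ≤ Real.log ((μ {ω | ∃ m, n < m ∧ walk Y m ω = 0}).toReal) :=
      (Real.log_le_log_iff hpos hP0).2 hlo
    have hexpand : Real.log (uval p ^ n * (p * (1 - p) * (1 - 2*p)) / ((n:ℝ)+1))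
        = (n:ℝ) * Real.log (uval p) + Real.log (p * (1 - p) * (1 - 2*p))
          - Real.log ((n:ℝ)+1) := by
      rw [Real.log_div (by positivity) (by positivity),
        Real.log_mul (by positivity) (ne_of_gt hc1), Real.log_pow]
    have hLn : L n = ((n:ℝ) * Real.log (uval p) + Real.log (p * (1 - p) * (1 - 2*p))
        - Real.log ((n:ℝ)+1)) / (n:ℝ) := by
      rw [hLdef]
      field_simp
    rw [hLn]
    rw [hexpand] at hlogle
    exact div_le_div_of_nonneg_right hlogle hnR.le
  · filter_upwards [eventually_ge_atTop 1] with n hn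
    have hnR : (0:ℝ) < (n:ℝ) := by exact_mod_cast Nat.pos_of_ne_zero (by omega)
    have hlo := hPlo n
    have hhi := hPhi n
    have hpos : 0 < uval p ^ n * (p * (1 - p) * (1 - 2*p)) / ((n:ℝ)+1) := by positivity
    have hP0 : 0 < (μ {ω | ∃ m, n < m ∧ walk Y m ω = 0}).toReal := lt_of_lt_of_le hpos hlo
    have hhipos : (0:ℝ) < uval p ^ n / (1 - 2*p) := by positivity
    have hlogle : Real.log ((μ {ω | ∃ m, n < m ∧ walk Y m ω = 0}).toReal)
        ≤ Real.log (uval p ^ n / (1 - 2*p)) := (Real.log_le_log_iff hP0 hhipos).2 hhi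
    have hexpand : Real.log (uval p ^ n / (1 - 2*p))
        = (n:ℝ) * Real.log (uval p) - Real.log (1 - 2*p) := by
      rw [Real.log_div (by positivity) (ne_of_gt h12), Real.log_pow]
    have hUn : U n = ((n:ℝ) * Real.log (uval p) - Real.log (1 - 2*p)) / (n:ℝ) := by
      rw [hUdef]
      field_simp
    rw [hUn]
    rw [hexpand] at hlogle
    exact div_le_div_of_nonneg_right hlogle hnR.le
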